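/- arXiv:2207.07299 — 2 statements merged into one kernel-verified Lean document; each statement's English description precedes it below -/
import Mathlib

section
/- Under the two-groups model, let 𝓡 = 𝓡(p_1,…,p_m) ⊆ {1,…,m} be any measurable multiple-testing procedure, with V = #{i ∈ 𝓡 : H_i = 0} and R = |𝓡|. Then FDR(𝓡) := E[(V/R)·1{R > 0}] ≤ max-lfdr(𝓡) := E[max_{i∈𝓡} lfdr(p_i)], where the maximum over an empty rejection set is 0. -/
open MeasureTheory ProbabilityTheory Filter

noncomputable section

/-- The uniform distribution on `[0,1]` (the null `p`-value distribution). -/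
def uniform01 : Measure ℝ := volume.restrict (Set.Icc 0 1)

/-- `orderStat m p k` is the `k`-th order statistic `p_(k)` of `p_1, …, p_m` (1-indexed),
with the conventions `p_(0) = 0` and `p_(k) = 0` for `k > m`. -/
def orderStat (m : ℕ) (p : Fin m → ℝ) (k : ℕ) : ℝ :=
  if h : 1 ≤ k ∧ k ≤ m then p (Tuple.sort p ⟨k - 1, by omega⟩) else 0

/-- The SL rejection count at level `q`: the largest minimizer over `k ∈ {0, …, m}`
of `p_(k) - q k / m`. -/
def slCount (m : ℕ) (q : ℝ) (p : Fin m → ℝ) : ℕ :=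
  sSup {k | k ≤ m ∧ ∀ j ≤ m,
    orderStat m p k - q * k / m ≤ orderStat m p j - q * j / m}

/-- The SL rejection threshold `τ_q = p_(R_q)`. -/
def slThreshold (m : ℕ) (q : ℝ) (p : Fin m → ℝ) : ℝ :=
  orderStat m p (slCount m q p)

/-- The empirical cdf `F_m` of `p_1, …, p_m`. -/
def ecdf (m : ℕ) (p : Fin m → ℝ) (t : ℝ) : ℝ :=
  ((Finset.univ.filter fun i => p i ≤ t).card : ℝ) / m

/-- The alternative `p`-value distribution, with density `f1` on `[0,1]`. -/
def altMeasure (f1 : ℝ → ℝ) : Measure ℝ :=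
  uniform01.withDensity fun t => ENNReal.ofReal (f1 t)

/-- The two-groups distribution of a pair `(H_i, p_i)`: `H_i ~ Bernoulli(1 - π0)`
(`false` meaning the null holds), `p_i | H_i = false ~ Unif[0,1]`, and
`p_i | H_i = true` has density `f1`. -/
def pairMeasure (π0 : ℝ) (f1 : ℝ → ℝ) : Measure (Bool × ℝ) :=
  ENNReal.ofReal π0 • (Measure.dirac false).prod uniform01
    + ENNReal.ofReal (1 - π0) • (Measure.dirac true).prod (altMeasure f1)

/-- The joint distribution of the i.i.d. pairs `(H_i, p_i)`, `i = 1, …, m`. -/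
def jointMeasure (m : ℕ) (π0 : ℝ) (f1 : ℝ → ℝ) : Measure (Fin m → Bool × ℝ) :=
  Measure.pi fun _ => pairMeasure π0 f1

/-- The `p`-values of an outcome of the two-groups model. -/
def pvals (m : ℕ) (x : Fin m → Bool × ℝ) (i : Fin m) : ℝ := (x i).2

/-- The marginal `p`-value mixture density `f = π0 + (1 - π0) f1`. -/
def mixDensity (π0 : ℝ) (f1 : ℝ → ℝ) (t : ℝ) : ℝ := π0 + (1 - π0) * f1 t

/-- The local false discovery rate `lfdr(t) = π0 / f(t)`. -/
def lfdr (π0 : ℝ) (f1 : ℝ → ℝ) (t : ℝ) : ℝ := π0 / mixDensity π0 f1 t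

/-- The event that, rejecting the `R` hypotheses with the smallest `p`-values,
the last rejection is a false discovery: `R > 0` and `H_(R) = 0`, where `H_(R)` is the
hypothesis indicator paired with the `R`-th smallest `p`-value. -/
def lastRejNull (m : ℕ) (R : ℕ) (x : Fin m → Bool × ℝ) : Prop :=
  ∃ h : 1 ≤ R ∧ R ≤ m,
    (x (Tuple.sort (pvals m x) ⟨R - 1, by omega⟩)).1 = false

/-- The maximum of `g` over a finite set `S`, with the convention that the
maximum over the empty set is `0`. -/
def maxOver {ι : Type*} (S : Finset ι) (g : ι → ℝ) : ℝ :=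
  if h : S.Nonempty then S.sup' h g else 0

/-- The SL rejection set `𝓡_q = {i : p_i ≤ τ_q}`. -/
def rejSet (m : ℕ) (q : ℝ) (p : Fin m → ℝ) : Finset (Fin m) :=
  Finset.univ.filter fun i => p i ≤ slThreshold m q p

section Helpers

variable {π0 : ℝ} {f1 : ℝ → ℝ}

lemma mix_nonneg (hπ0 : 0 ≤ π0) (hπ1 : π0 ≤ 1) (hf1nn : ∀ t, 0 ≤ f1 t) (t : ℝ) :
    0 ≤ mixDensity π0 f1 t := by
  have := hf1nn t; unfold mixDensity; nlinarith

lemma mix_ge (hπ1 : π0 ≤ 1) (hf1nn : ∀ t, 0 ≤ f1 t) (t : ℝ) :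
    π0 ≤ mixDensity π0 f1 t := by
  have := hf1nn t; unfold mixDensity; nlinarith

lemma lfdr_nonneg (hπ0 : 0 ≤ π0) (hπ1 : π0 ≤ 1) (hf1nn : ∀ t, 0 ≤ f1 t) (t : ℝ) :
    0 ≤ lfdr π0 f1 t :=
  div_nonneg hπ0 (mix_nonneg hπ0 hπ1 hf1nn t)

lemma lfdr_le_one (hπ0 : 0 ≤ π0) (hπ1 : π0 ≤ 1) (hf1nn : ∀ t, 0 ≤ f1 t) (t : ℝ) :
    lfdr π0 f1 t ≤ 1 := by
  unfold lfdr
  rcases eq_or_lt_of_le (mix_nonneg hπ0 hπ1 hf1nn t) with h | h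
  · rw [← h]; simp
  · rw [div_le_one h]; exact mix_ge hπ1 hf1nn t

lemma mix_mul_lfdr (hπ0 : 0 ≤ π0) (hπ1 : π0 ≤ 1) (hf1nn : ∀ t, 0 ≤ f1 t) (t : ℝ) :
    mixDensity π0 f1 t * lfdr π0 f1 t = π0 := by
  unfold lfdr
  rcases eq_or_ne (mixDensity π0 f1 t) 0 with h | h
  · have h2 := mix_ge hπ1 hf1nn t
    rw [h] at h2 ⊢
    simp; linarith
  · field_simp

lemma measurable_mix (hf1m : Measurable f1) : Measurable (mixDensity π0 f1) :=
  measurable_const.add (measurable_const.mul hf1m)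

lemma measurable_lfdr (hf1m : Measurable f1) : Measurable (lfdr π0 f1) :=
  measurable_const.div (measurable_mix hf1m)

instance : IsProbabilityMeasure uniform01 :=
  ⟨by simp [uniform01, Real.volume_Icc]⟩

lemma f1_integrable (hf1int : ∫ t in Set.Icc (0:ℝ) 1, f1 t = 1) :
    Integrable f1 uniform01 := by
  rw [show uniform01 = volume.restrict (Set.Icc 0 1) from rfl]
  by_contra h
  rw [integral_undef h] at hf1int
  norm_num at hf1int

lemma alt_prob (hf1int : ∫ t in Set.Icc (0:ℝ) 1, f1 t = 1) (hf1nn : ∀ t, 0 ≤ f1 t) :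
    IsProbabilityMeasure (altMeasure f1) := by
  constructor
  rw [altMeasure, withDensity_apply _ MeasurableSet.univ, Measure.restrict_univ,
    ← ofReal_integral_eq_lintegral_ofReal (f1_integrable hf1int) (ae_of_all _ hf1nn)]
  rw [show ∫ t, f1 t ∂uniform01 = ∫ t in Set.Icc (0:ℝ) 1, f1 t from rfl, hf1int]
  simp

lemma pair_prob (hπ0 : 0 ≤ π0) (hπ1 : π0 ≤ 1) (hf1nn : ∀ t, 0 ≤ f1 t)
    (hf1int : ∫ t in Set.Icc (0:ℝ) 1, f1 t = 1) :
    IsProbabilityMeasure (pairMeasure π0 f1) := by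
  haveI := alt_prob hf1int hf1nn
  constructor
  simp only [pairMeasure, Measure.add_apply, Measure.smul_apply, smul_eq_mul]
  rw [measure_univ, measure_univ, mul_one, mul_one,
    ← ENNReal.ofReal_add hπ0 (by linarith)]
  norm_num

end Helpers

section Cond

variable {π0 : ℝ} {f1 : ℝ → ℝ}

lemma integrable_of_bound {α : Type*} [MeasurableSpace α] (μ : Measure α) [IsFiniteMeasure μ]
    {g : α → ℝ} (hg : Measurable g) (C : ℝ) (h : ∀ x, |g x| ≤ C) : Integrable g μ :=
  (integrable_const C).mono' hg.aestronglyMeasurable (ae_of_all _ h)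

lemma integral_pairMeasure (hπ0 : 0 ≤ π0) (hπ1 : π0 ≤ 1) (hf1nn : ∀ t, 0 ≤ f1 t)
    (hf1int : ∫ t in Set.Icc (0:ℝ) 1, f1 t = 1)
    {g : Bool × ℝ → ℝ} (hg : Measurable g) (hb : ∀ y, |g y| ≤ 1) :
    ∫ y, g y ∂pairMeasure π0 f1
      = π0 * ∫ t, g (false, t) ∂uniform01 + (1 - π0) * ∫ t, g (true, t) ∂altMeasure f1 := by
  haveI := alt_prob hf1int hf1nn
  have h1 : Integrable g ((Measure.dirac false).prod uniform01) :=
    integrable_of_bound _ hg 1 hb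
  have h2 : Integrable g ((Measure.dirac true).prod (altMeasure f1)) :=
    integrable_of_bound _ hg 1 hb
  rw [pairMeasure, integral_add_measure (h1.smul_measure ENNReal.ofReal_ne_top)
      (h2.smul_measure ENNReal.ofReal_ne_top),
    integral_smul_measure, integral_smul_measure,
    Measure.dirac_prod, Measure.dirac_prod,
    integral_map measurable_prodMk_left.aemeasurable hg.aestronglyMeasurable,
    integral_map measurable_prodMk_left.aemeasurable hg.aestronglyMeasurable,
    ENNReal.toReal_ofReal hπ0, ENNReal.toReal_ofReal (by linarith)]
  simp [smul_eq_mul]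

lemma cond_single (hπ0 : 0 ≤ π0) (hπ1 : π0 ≤ 1) (hf1m : Measurable f1)
    (hf1nn : ∀ t, 0 ≤ f1 t) (hf1int : ∫ t in Set.Icc (0:ℝ) 1, f1 t = 1)
    {B : Set ℝ} (hB : MeasurableSet B) :
    ∫ y : Bool × ℝ, (if y.1 = false then (1:ℝ) else 0) * B.indicator 1 y.2 ∂pairMeasure π0 f1
      = ∫ y : Bool × ℝ, lfdr π0 f1 y.2 * B.indicator 1 y.2 ∂pairMeasure π0 f1 := by
  have hind : Measurable (B.indicator (1 : ℝ → ℝ)) := measurable_one.indicator hB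
  have hindb : ∀ t, 0 ≤ B.indicator (1 : ℝ → ℝ) t ∧ B.indicator (1 : ℝ → ℝ) t ≤ 1 := by
    intro t; unfold Set.indicator; split <;> norm_num
  have hg1 : Measurable fun y : Bool × ℝ => (if y.1 = false then (1:ℝ) else 0) * B.indicator 1 y.2 := by
    apply Measurable.mul
    · exact (measurable_from_top (f := fun b : Bool => if b = false then (1:ℝ) else 0)).comp measurable_fst
    · exact hind.comp measurable_snd
  have hg2 : Measurable fun y : Bool × ℝ => lfdr π0 f1 y.2 * B.indicator 1 y.2 :=
    ((measurable_lfdr hf1m).comp measurable_snd).mul (hind.comp measurable_snd)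
  have hb1 : ∀ y : Bool × ℝ, |(if y.1 = false then (1:ℝ) else 0) * B.indicator 1 y.2| ≤ 1 := by
    intro y
    rw [abs_mul]
    have := hindb y.2
    have : |B.indicator (1 : ℝ → ℝ) y.2| ≤ 1 := by rw [abs_le]; constructor <;> linarith [this.1, this.2]
    split <;> simp_all
  have hlfdr : ∀ t, |lfdr π0 f1 t| ≤ 1 := by
    intro t; rw [abs_le]
    constructor
    · linarith [lfdr_nonneg hπ0 hπ1 hf1nn t]
    · exact lfdr_le_one hπ0 hπ1 hf1nn t
  have hb2 : ∀ y : Bool × ℝ, |lfdr π0 f1 y.2 * B.indicator 1 y.2| ≤ 1 := by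
    intro y
    rw [abs_mul]
    have h1 := hlfdr y.2
    have h2 := hindb y.2
    have h3 : |B.indicator (1 : ℝ → ℝ) y.2| ≤ 1 := by rw [abs_le]; constructor <;> linarith [h2.1, h2.2]
    calc |lfdr π0 f1 y.2| * |B.indicator 1 y.2| ≤ 1 * 1 := by
          apply mul_le_mul h1 h3 (abs_nonneg _) zero_le_one
      _ = 1 := by norm_num
  rw [integral_pairMeasure hπ0 hπ1 hf1nn hf1int hg1 hb1,
    integral_pairMeasure hπ0 hπ1 hf1nn hf1int hg2 hb2]
  norm_num
  -- now: π0 * ∫ ind = π0 * ∫ lfdr * ind + (1-π0) * ∫ lfdr * ind ∂alt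
  have hf1i := f1_integrable (f1 := f1) hf1int
  have halt : ∫ t, lfdr π0 f1 t * B.indicator 1 t ∂altMeasure f1
      = ∫ t, f1 t * (lfdr π0 f1 t * B.indicator 1 t) ∂uniform01 := by
    rw [show altMeasure f1 = uniform01.withDensity fun t => ((f1 t).toNNReal : ENNReal) from rfl,
      integral_withDensity_eq_integral_smul hf1m.real_toNNReal]
    congr 1 with t
    rw [NNReal.smul_def, smul_eq_mul, Real.coe_toNNReal _ (hf1nn t)]
  rw [halt]
  have i1 : Integrable (fun t => lfdr π0 f1 t * B.indicator 1 t) uniform01 :=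
    integrable_of_bound _ ((measurable_lfdr hf1m).mul hind) 1 (fun t => hb2 (true, t))
  have i2 : Integrable (fun t => f1 t * (lfdr π0 f1 t * B.indicator 1 t)) uniform01 := by
    apply hf1i.mono ((hf1m.mul ((measurable_lfdr hf1m).mul hind))).aestronglyMeasurable
    apply ae_of_all
    intro t
    rw [Real.norm_eq_abs, Real.norm_eq_abs, Pi.mul_apply, Pi.mul_apply, abs_mul]
    calc |f1 t| * |lfdr π0 f1 t * B.indicator 1 t| ≤ |f1 t| * 1 :=
          mul_le_mul_of_nonneg_left (hb2 (true, t)) (abs_nonneg _)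
      _ = |f1 t| := by ring
  rw [← integral_const_mul, ← integral_const_mul, ← integral_const_mul,
    ← integral_add (i1.const_mul π0) (i2.const_mul (1 - π0))]
  apply integral_congr_ae
  apply ae_of_all
  intro t
  have h : π0 * (lfdr π0 f1 t * B.indicator 1 t) + (1 - π0) * (f1 t * (lfdr π0 f1 t * B.indicator 1 t))
      = (mixDensity π0 f1 t * lfdr π0 f1 t) * B.indicator 1 t := by
    unfold mixDensity; ring
  show π0 * B.indicator 1 t
      = π0 * (lfdr π0 f1 t * B.indicator 1 t) + (1 - π0) * (f1 t * (lfdr π0 f1 t * B.indicator 1 t))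
  rw [h, mix_mul_lfdr hπ0 hπ1 hf1nn]

end Cond

section Joint

variable {π0 : ℝ} {f1 : ℝ → ℝ}

lemma measurable_pvals (m : ℕ) : Measurable (pvals m) :=
  measurable_pi_iff.2 fun i => (measurable_pi_apply i).snd

lemma insertNth_snd {n : ℕ} (i : Fin (n + 1)) (y : Bool × ℝ) (r : Fin n → Bool × ℝ) :
    pvals (n + 1) (i.insertNth y r) = i.insertNth y.2 (fun j => (r j).2) := by
  funext j
  refine Fin.succAboveCases i ?_ ?_ j
  · simp [pvals, Fin.insertNth_apply_same]
  · intro k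
    simp [pvals, Fin.insertNth_apply_succAbove]

lemma measurable_insertNth {n : ℕ} (i : Fin (n + 1)) (q : Fin n → ℝ) :
    Measurable fun t : ℝ => i.insertNth (α := fun _ => ℝ) t q := by
  refine measurable_pi_lambda _ fun j => ?_
  refine Fin.succAboveCases i ?_ ?_ j
  · simp only [Fin.insertNth_apply_same]; exact measurable_id
  · intro k
    simp only [Fin.insertNth_apply_succAbove]
    exact measurable_const

lemma cond_joint (n : ℕ) (i : Fin (n + 1)) (hπ0 : 0 ≤ π0) (hπ1 : π0 ≤ 1)
    (hf1m : Measurable f1) (hf1nn : ∀ t, 0 ≤ f1 t)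
    (hf1int : ∫ t in Set.Icc (0:ℝ) 1, f1 t = 1)
    {A : Set (Fin (n + 1) → ℝ)} (hA : MeasurableSet A) :
    ∫ x, (if (x i).1 = false then (1:ℝ) else 0) * A.indicator 1 (pvals (n + 1) x)
        ∂jointMeasure (n + 1) π0 f1
      = ∫ x, lfdr π0 f1 ((x i).2) * A.indicator 1 (pvals (n + 1) x)
        ∂jointMeasure (n + 1) π0 f1 := by
  haveI := pair_prob hπ0 hπ1 hf1nn hf1int
  have hmp := (measurePreserving_piFinSuccAbove
    (fun _ : Fin (n + 1) => pairMeasure π0 f1) i).symm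
  have hind : Measurable (A.indicator (1 : (Fin (n+1) → ℝ) → ℝ)) := measurable_one.indicator hA
  have hindb : ∀ p, |A.indicator (1 : (Fin (n+1) → ℝ) → ℝ) p| ≤ 1 := by
    intro p; unfold Set.indicator; split <;> norm_num
  have hlfdr : ∀ t, |lfdr π0 f1 t| ≤ 1 := by
    intro t; rw [abs_le]
    exact ⟨by linarith [lfdr_nonneg hπ0 hπ1 hf1nn t], lfdr_le_one hπ0 hπ1 hf1nn t⟩
  have hg1 : Measurable fun x : Fin (n+1) → Bool × ℝ =>
      (if (x i).1 = false then (1:ℝ) else 0) * A.indicator 1 (pvals (n + 1) x) := by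
    apply Measurable.mul
    · exact (measurable_from_top (f := fun b : Bool => if b = false then (1:ℝ) else 0)).comp
        ((measurable_pi_apply i).fst)
    · exact hind.comp (measurable_pvals (n+1))
  have hg2 : Measurable fun x : Fin (n+1) → Bool × ℝ =>
      lfdr π0 f1 ((x i).2) * A.indicator 1 (pvals (n + 1) x) :=
    ((measurable_lfdr hf1m).comp ((measurable_pi_apply i).snd)).mul
      (hind.comp (measurable_pvals (n+1)))
  have hb1 : ∀ x : Fin (n+1) → Bool × ℝ,
      |(if (x i).1 = false then (1:ℝ) else 0) * A.indicator 1 (pvals (n + 1) x)| ≤ 1 := by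
    intro x
    rw [abs_mul]
    have := hindb (pvals (n+1) x)
    split <;> simp_all
  have hb2 : ∀ x : Fin (n+1) → Bool × ℝ,
      |lfdr π0 f1 ((x i).2) * A.indicator 1 (pvals (n + 1) x)| ≤ 1 := by
    intro x
    rw [abs_mul]
    calc |lfdr π0 f1 ((x i).2)| * |A.indicator 1 (pvals (n+1) x)| ≤ 1 * 1 :=
        mul_le_mul (hlfdr _) (hindb _) (abs_nonneg _) zero_le_one
      _ = 1 := by norm_num
  set e := MeasurableEquiv.piFinSuccAbove (fun _ : Fin (n + 1) => Bool × ℝ) i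
  rw [show jointMeasure (n+1) π0 f1 = Measure.pi (fun _ => pairMeasure π0 f1) from rfl]
  rw [← hmp.integral_comp e.symm.measurableEmbedding, ← hmp.integral_comp e.symm.measurableEmbedding]
  have hins : ∀ z : (Bool × ℝ) × (Fin n → Bool × ℝ), e.symm z = i.insertNth z.1 z.2 := by
    intro z
    simp [e, MeasurableEquiv.piFinSuccAbove_symm_apply, Fin.insertNthEquiv]
  have him1 : Integrable (fun z : (Bool × ℝ) × (Fin n → Bool × ℝ) =>
      (if ((e.symm z) i).1 = false then (1:ℝ) else 0) * A.indicator 1 (pvals (n + 1) (e.symm z)))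
      ((pairMeasure π0 f1).prod (Measure.pi fun _ => pairMeasure π0 f1)) :=
    integrable_of_bound _ (hg1.comp e.symm.measurable) 1 (fun z => hb1 _)
  have him2 : Integrable (fun z : (Bool × ℝ) × (Fin n → Bool × ℝ) =>
      lfdr π0 f1 (((e.symm z) i).2) * A.indicator 1 (pvals (n + 1) (e.symm z)))
      ((pairMeasure π0 f1).prod (Measure.pi fun _ => pairMeasure π0 f1)) :=
    integrable_of_bound _ (hg2.comp e.symm.measurable) 1 (fun z => hb2 _)
  rw [integral_prod_symm _ him1, integral_prod_symm _ him2]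
  apply integral_congr_ae
  apply ae_of_all
  intro r
  have hB : MeasurableSet {t : ℝ | i.insertNth t (fun j => (r j).2) ∈ A} :=
    measurable_insertNth i _ hA
  have e1 : ∀ y : Bool × ℝ,
      (if ((e.symm (y, r)) i).1 = false then (1:ℝ) else 0)
          * A.indicator 1 (pvals (n + 1) (e.symm (y, r)))
        = (if y.1 = false then (1:ℝ) else 0)
          * ({t : ℝ | i.insertNth t (fun j => (r j).2) ∈ A}).indicator 1 y.2 := by
    intro y
    rw [hins (y, r)]
    simp only [Fin.insertNth_apply_same, insertNth_snd]
    by_cases hmem : i.insertNth y.2 (fun j => (r j).2) ∈ A <;>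
      simp [Set.indicator_apply, hmem]
  have e2 : ∀ y : Bool × ℝ,
      lfdr π0 f1 (((e.symm (y, r)) i).2) * A.indicator 1 (pvals (n + 1) (e.symm (y, r)))
        = lfdr π0 f1 y.2
          * ({t : ℝ | i.insertNth t (fun j => (r j).2) ∈ A}).indicator 1 y.2 := by
    intro y
    rw [hins (y, r)]
    simp only [Fin.insertNth_apply_same, insertNth_snd]
    by_cases hmem : i.insertNth y.2 (fun j => (r j).2) ∈ A <;>
      simp [Set.indicator_apply, hmem]
  simp only [e1, e2]
  exact cond_single hπ0 hπ1 hf1m hf1nn hf1int hB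

end Joint

section MaxOver

variable {ι : Type*} {S : Finset ι} {g : ι → ℝ}

lemma maxOver_nonneg (h : ∀ i ∈ S, 0 ≤ g i) : 0 ≤ maxOver S g := by
  unfold maxOver
  split
  · next hS =>
      obtain ⟨i, hi⟩ := hS
      exact le_trans (h i hi) (Finset.le_sup' g hi)
  · exact le_refl 0
  
lemma maxOver_le_one (h : ∀ i ∈ S, g i ≤ 1) : maxOver S g ≤ 1 := by
  unfold maxOver
  split
  · exact Finset.sup'_le _ _ h
  · norm_num

lemma le_maxOver {i : ι} (hi : i ∈ S) : g i ≤ maxOver S g := by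
  unfold maxOver
  rw [dif_pos ⟨i, hi⟩]
  exact Finset.le_sup' g hi

lemma measurable_maxOver {α : Type*} [MeasurableSpace α] (S : Finset ι) (g : ι → α → ℝ)
    (h : ∀ i, Measurable (g i)) : Measurable fun x => maxOver S fun i => g i x := by
  unfold maxOver
  by_cases hS : S.Nonempty
  · simp only [dif_pos hS]
    induction hS using Finset.Nonempty.cons_induction with
    | singleton a =>
        simp only [Finset.sup'_singleton]
        exact h a
    | cons a s ha hs ih =>
        have heq : (fun x => (Finset.cons a s ha).sup' (Finset.cons_nonempty ha) fun i => g i x)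
            = fun x => g a x ⊔ s.sup' hs fun i => g i x :=
          funext fun x => Finset.sup'_cons hs (fun i => g i x)
        rw [heq]
        exact (h a).sup ih
  · simp only [dif_neg hS]
    exact measurable_const

end MaxOver

section Main

variable {π0 : ℝ} {f1 : ℝ → ℝ}

lemma card_filter_real {m : ℕ} (S : Finset (Fin m)) (x : Fin m → Bool × ℝ) :
    ((S.filter fun i => (x i).1 = false).card : ℝ)
      = ∑ i ∈ S, (if (x i).1 = false then (1:ℝ) else 0) := by
  rw [Finset.card_filter]
  push_cast
  exact Finset.sum_congr rfl fun i _ => by split <;> simp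

lemma measurable_count {m : ℕ} (S : Finset (Fin m)) :
    Measurable fun x : Fin m → Bool × ℝ => ((S.filter fun i => (x i).1 = false).card : ℝ) := by
  simp only [card_filter_real]
  exact Finset.measurable_sum _ fun i _ =>
    (measurable_from_top (f := fun b : Bool => if b = false then (1:ℝ) else 0)).comp
      ((measurable_pi_apply i).fst)

lemma perS (n : ℕ) (hπ0 : 0 ≤ π0) (hπ1 : π0 ≤ 1) (hf1m : Measurable f1)
    (hf1nn : ∀ t, 0 ≤ f1 t) (hf1int : ∫ t in Set.Icc (0:ℝ) 1, f1 t = 1)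
    (S : Finset (Fin (n+1))) {A : Set (Fin (n+1) → ℝ)} (hA : MeasurableSet A) :
    ∫ x, A.indicator 1 (pvals (n+1) x) *
        (if S.Nonempty then ((S.filter fun i => (x i).1 = false).card : ℝ) / S.card else 0)
        ∂jointMeasure (n+1) π0 f1
      ≤ ∫ x, A.indicator 1 (pvals (n+1) x) * maxOver S (fun i => lfdr π0 f1 ((x i).2))
        ∂jointMeasure (n+1) π0 f1 := by
  haveI := pair_prob hπ0 hπ1 hf1nn hf1int
  haveI : IsProbabilityMeasure (jointMeasure (n+1) π0 f1) := by
    rw [jointMeasure]; infer_instance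
  have hind0 : Measurable (A.indicator (1 : (Fin (n+1) → ℝ) → ℝ)) :=
    measurable_one.indicator hA
  have hindm : Measurable fun x : Fin (n+1) → Bool × ℝ => A.indicator 1 (pvals (n+1) x) :=
    hind0.comp (measurable_pvals _)
  have hind01 : ∀ x : Fin (n+1) → Bool × ℝ,
      0 ≤ A.indicator (1 : (Fin (n+1) → ℝ) → ℝ) (pvals (n+1) x)
        ∧ A.indicator (1 : (Fin (n+1) → ℝ) → ℝ) (pvals (n+1) x) ≤ 1 := by
    intro x; unfold Set.indicator; split <;> norm_num
  have hlfdr01 : ∀ t, 0 ≤ lfdr π0 f1 t ∧ lfdr π0 f1 t ≤ 1 := fun t =>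
    ⟨lfdr_nonneg hπ0 hπ1 hf1nn t, lfdr_le_one hπ0 hπ1 hf1nn t⟩
  have hGm : Measurable fun x : Fin (n+1) → Bool × ℝ =>
      A.indicator 1 (pvals (n+1) x) * maxOver S (fun i => lfdr π0 f1 ((x i).2)) :=
    hindm.mul (measurable_maxOver S _ fun i =>
      (measurable_lfdr hf1m).comp (measurable_pi_apply i).snd)
  have hmax01 : ∀ x : Fin (n+1) → Bool × ℝ,
      0 ≤ maxOver S (fun i => lfdr π0 f1 ((x i).2))
        ∧ maxOver S (fun i => lfdr π0 f1 ((x i).2)) ≤ 1 := fun x =>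
    ⟨maxOver_nonneg fun i _ => (hlfdr01 _).1, maxOver_le_one fun i _ => (hlfdr01 _).2⟩
  have hGb : ∀ x : Fin (n+1) → Bool × ℝ,
      |A.indicator 1 (pvals (n+1) x) * maxOver S (fun i => lfdr π0 f1 ((x i).2))| ≤ 1 := by
    intro x
    rw [abs_mul, abs_of_nonneg (hind01 x).1, abs_of_nonneg (hmax01 x).1]
    calc A.indicator 1 (pvals (n+1) x) * maxOver S (fun i => lfdr π0 f1 ((x i).2)) ≤ 1 * 1 :=
        mul_le_mul (hind01 x).2 (hmax01 x).2 (hmax01 x).1 zero_le_one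
      _ = 1 := by norm_num
  have hGint : Integrable (fun x => A.indicator 1 (pvals (n+1) x)
      * maxOver S (fun i => lfdr π0 f1 ((x i).2))) (jointMeasure (n+1) π0 f1) :=
    integrable_of_bound _ hGm 1 hGb
  by_cases hS : S.Nonempty
  · have hc : (0:ℝ) < S.card := by exact_mod_cast Finset.card_pos.2 hS
    have hχm : ∀ i : Fin (n+1), Measurable fun x : Fin (n+1) → Bool × ℝ =>
        (if (x i).1 = false then (1:ℝ) else 0) * A.indicator 1 (pvals (n+1) x) := fun i =>
      ((measurable_from_top (f := fun b : Bool => if b = false then (1:ℝ) else 0)).comp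
        ((measurable_pi_apply i).fst)).mul hindm
    have hχb : ∀ (i : Fin (n+1)) (x : Fin (n+1) → Bool × ℝ),
        |(if (x i).1 = false then (1:ℝ) else 0) * A.indicator 1 (pvals (n+1) x)| ≤ 1 := by
      intro i x
      rw [abs_mul]
      have h1 := (hind01 x).1
      have h2 := (hind01 x).2
      have : |A.indicator (1 : (Fin (n+1) → ℝ) → ℝ) (pvals (n+1) x)| ≤ 1 := by
        rw [abs_of_nonneg h1]; exact h2
      split <;> simp_all
    have hχint : ∀ i : Fin (n+1), Integrable (fun x =>
        (if (x i).1 = false then (1:ℝ) else 0) * A.indicator 1 (pvals (n+1) x))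
        (jointMeasure (n+1) π0 f1) := fun i => integrable_of_bound _ (hχm i) 1 (hχb i)
    have hLm : ∀ i : Fin (n+1), Measurable fun x : Fin (n+1) → Bool × ℝ =>
        lfdr π0 f1 ((x i).2) * A.indicator 1 (pvals (n+1) x) := fun i =>
      ((measurable_lfdr hf1m).comp (measurable_pi_apply i).snd).mul hindm
    have hLb : ∀ (i : Fin (n+1)) (x : Fin (n+1) → Bool × ℝ),
        |lfdr π0 f1 ((x i).2) * A.indicator 1 (pvals (n+1) x)| ≤ 1 := by
      intro i x
      rw [abs_mul, abs_of_nonneg (hlfdr01 _).1, abs_of_nonneg (hind01 x).1]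
      calc lfdr π0 f1 ((x i).2) * A.indicator 1 (pvals (n+1) x) ≤ 1 * 1 :=
          mul_le_mul (hlfdr01 _).2 (hind01 x).2 (hind01 x).1 zero_le_one
        _ = 1 := by norm_num
    have hLint : ∀ i : Fin (n+1), Integrable (fun x =>
        lfdr π0 f1 ((x i).2) * A.indicator 1 (pvals (n+1) x))
        (jointMeasure (n+1) π0 f1) := fun i => integrable_of_bound _ (hLm i) 1 (hLb i)
    have hFeq : (fun x : Fin (n+1) → Bool × ℝ => A.indicator 1 (pvals (n+1) x) *
        (if S.Nonempty then ((S.filter fun i => (x i).1 = false).card : ℝ) / S.card else 0))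
        = fun x => ∑ i ∈ S, ((S.card : ℝ))⁻¹ *
            ((if (x i).1 = false then (1:ℝ) else 0) * A.indicator 1 (pvals (n+1) x)) := by
      funext x
      rw [if_pos hS, card_filter_real]
      rw [show ∑ i ∈ S, ((S.card : ℝ))⁻¹ *
            ((if (x i).1 = false then (1:ℝ) else 0) * A.indicator 1 (pvals (n+1) x))
          = ((S.card : ℝ))⁻¹ * ((∑ i ∈ S, (if (x i).1 = false then (1:ℝ) else 0))
              * A.indicator 1 (pvals (n+1) x)) from by rw [Finset.sum_mul, Finset.mul_sum]]
      ring
    calc ∫ x, A.indicator 1 (pvals (n+1) x) *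
          (if S.Nonempty then ((S.filter fun i => (x i).1 = false).card : ℝ) / S.card else 0)
          ∂jointMeasure (n+1) π0 f1
        = ∑ i ∈ S, ∫ x, ((S.card : ℝ))⁻¹ *
            ((if (x i).1 = false then (1:ℝ) else 0) * A.indicator 1 (pvals (n+1) x))
            ∂jointMeasure (n+1) π0 f1 := by
          rw [hFeq, integral_finset_sum _ fun i _ => (hχint i).const_mul _]
      _ = ∑ i ∈ S, ((S.card : ℝ))⁻¹ *
            ∫ x, lfdr π0 f1 ((x i).2) * A.indicator 1 (pvals (n+1) x)
            ∂jointMeasure (n+1) π0 f1 := by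
          refine Finset.sum_congr rfl fun i hi => ?_
          rw [integral_const_mul, cond_joint n i hπ0 hπ1 hf1m hf1nn hf1int hA]
      _ ≤ ∑ i ∈ S, ((S.card : ℝ))⁻¹ *
            ∫ x, A.indicator 1 (pvals (n+1) x) * maxOver S (fun j => lfdr π0 f1 ((x j).2))
            ∂jointMeasure (n+1) π0 f1 := by
          refine Finset.sum_le_sum fun i hi => ?_
          refine mul_le_mul_of_nonneg_left ?_ (inv_nonneg.2 hc.le)
          refine integral_mono (hLint i) hGint fun x => ?_
          calc lfdr π0 f1 ((x i).2) * A.indicator 1 (pvals (n+1) x)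
              ≤ maxOver S (fun j => lfdr π0 f1 ((x j).2)) * A.indicator 1 (pvals (n+1) x) :=
                mul_le_mul_of_nonneg_right (le_maxOver (g := fun j => lfdr π0 f1 ((x j).2)) hi) (hind01 x).1
            _ = A.indicator 1 (pvals (n+1) x) * maxOver S (fun j => lfdr π0 f1 ((x j).2)) :=
                mul_comm _ _
      _ = ∫ x, A.indicator 1 (pvals (n+1) x) * maxOver S (fun j => lfdr π0 f1 ((x j).2))
            ∂jointMeasure (n+1) π0 f1 := by
          rw [Finset.sum_const, nsmul_eq_mul, ← mul_assoc, mul_inv_cancel₀ hc.ne', one_mul]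
  · simp only [if_neg hS, mul_zero, integral_zero]
    apply integral_nonneg
    intro x
    exact mul_nonneg (hind01 x).1 (hmax01 x).1

end Main


/-- Under the two-groups model, for any measurable multiple-testing
procedure `𝓡 = 𝓡(p_1, …, p_m) ⊆ {1, …, m}`, with `V = #{i ∈ 𝓡 : H_i = 0}` and
`R = |𝓡|`, we have `FDR(𝓡) := E[(V/R)·1{R > 0}] ≤ max-lfdr(𝓡) := E[max_{i ∈ 𝓡} lfdr(p_i)]`,
where the maximum over an empty rejection set is `0`. -/
theorem stmt7 (m : ℕ) (hm : 0 < m) (π0 : ℝ) (hπ0 : 0 ≤ π0) (hπ1 : π0 ≤ 1)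
    (f1 : ℝ → ℝ) (hf1m : Measurable f1) (hf1nn : ∀ t, 0 ≤ f1 t)
    (hf1int : ∫ t in Set.Icc (0:ℝ) 1, f1 t = 1)
    (𝓡 : (Fin m → ℝ) → Finset (Fin m))
    (h𝓡meas : ∀ S : Finset (Fin m), MeasurableSet {p | 𝓡 p = S}) :
    ∫ x, (if (𝓡 (pvals m x)).Nonempty
          then (((𝓡 (pvals m x)).filter fun i => (x i).1 = false).card : ℝ)
              / ((𝓡 (pvals m x)).card : ℝ)
          else 0) ∂ jointMeasure m π0 f1
      ≤ ∫ x, maxOver (𝓡 (pvals m x)) (fun i => lfdr π0 f1 (pvals m x i))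
          ∂ jointMeasure m π0 f1 := by
  classical
  rcases Nat.exists_eq_succ_of_ne_zero hm.ne' with ⟨n, rfl⟩
  haveI := pair_prob hπ0 hπ1 hf1nn hf1int
  haveI : IsProbabilityMeasure (jointMeasure (n+1) π0 f1) := by
    rw [jointMeasure]; infer_instance
  have hlfdr01 : ∀ t, 0 ≤ lfdr π0 f1 t ∧ lfdr π0 f1 t ≤ 1 := fun t =>
    ⟨lfdr_nonneg hπ0 hπ1 hf1nn t, lfdr_le_one hπ0 hπ1 hf1nn t⟩
  have hind01 : ∀ (A : Set (Fin (n+1) → ℝ)) (p : Fin (n+1) → ℝ),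
      0 ≤ A.indicator (1 : (Fin (n+1) → ℝ) → ℝ) p
        ∧ A.indicator (1 : (Fin (n+1) → ℝ) → ℝ) p ≤ 1 := by
    intro A p; unfold Set.indicator; split <;> norm_num
  have hindm : ∀ S : Finset (Fin (n+1)),
      Measurable fun x : Fin (n+1) → Bool × ℝ =>
        ({p | 𝓡 p = S}).indicator (1 : (Fin (n+1) → ℝ) → ℝ) (pvals (n+1) x) := fun S =>
    (measurable_one.indicator (h𝓡meas S) :
      Measurable (({p | 𝓡 p = S}).indicator (1 : (Fin (n+1) → ℝ) → ℝ))).comp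
      (measurable_pvals _)
  have hL : ∀ x : Fin (n+1) → Bool × ℝ,
      (if (𝓡 (pvals (n+1) x)).Nonempty
          then (((𝓡 (pvals (n+1) x)).filter fun i => (x i).1 = false).card : ℝ)
              / ((𝓡 (pvals (n+1) x)).card : ℝ)
          else 0)
        = ∑ S : Finset (Fin (n+1)), ({p | 𝓡 p = S}).indicator 1 (pvals (n+1) x) *
            (if S.Nonempty then ((S.filter fun i => (x i).1 = false).card : ℝ) / S.card else 0) := by
    intro x
    have hmem : pvals (n+1) x ∈ {p | 𝓡 p = 𝓡 (pvals (n+1) x)} := rfl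
    rw [Finset.sum_eq_single_of_mem (𝓡 (pvals (n+1) x)) (Finset.mem_univ _) ?_]
    · rw [Set.indicator_of_mem hmem, Pi.one_apply, one_mul]
    · intro S _ hne
      have hnm : pvals (n+1) x ∉ {p | 𝓡 p = S} := by
        intro h
        exact hne (Eq.symm h)
      rw [Set.indicator_of_notMem hnm, zero_mul]
  have hR : ∀ x : Fin (n+1) → Bool × ℝ,
      maxOver (𝓡 (pvals (n+1) x)) (fun i => lfdr π0 f1 (pvals (n+1) x i))
        = ∑ S : Finset (Fin (n+1)), ({p | 𝓡 p = S}).indicator 1 (pvals (n+1) x) *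
            maxOver S (fun i => lfdr π0 f1 ((x i).2)) := by
    intro x
    have hmem : pvals (n+1) x ∈ {p | 𝓡 p = 𝓡 (pvals (n+1) x)} := rfl
    rw [Finset.sum_eq_single_of_mem (𝓡 (pvals (n+1) x)) (Finset.mem_univ _) ?_]
    · rw [Set.indicator_of_mem hmem, Pi.one_apply, one_mul]
      rfl
    · intro S _ hne
      have hnm : pvals (n+1) x ∉ {p | 𝓡 p = S} := by
        intro h
        exact hne (Eq.symm h)
      rw [Set.indicator_of_notMem hnm, zero_mul]
  have hFint : ∀ S : Finset (Fin (n+1)),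
      Integrable (fun x => ({p | 𝓡 p = S}).indicator 1 (pvals (n+1) x) *
        (if S.Nonempty then ((S.filter fun i => (x i).1 = false).card : ℝ) / S.card else 0))
        (jointMeasure (n+1) π0 f1) := by
    intro S
    refine integrable_of_bound _ ?_ 1 ?_
    · apply (hindm S).mul
      by_cases hS : S.Nonempty
      · simp only [if_pos hS]
        exact (measurable_count S).div_const _
      · simp only [if_neg hS]
        exact measurable_const
    · intro x
      rw [abs_mul]
      have h1 := (hind01 {p | 𝓡 p = S} (pvals (n+1) x)).1
      have h2 := (hind01 {p | 𝓡 p = S} (pvals (n+1) x)).2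
      have hq : |if S.Nonempty then ((S.filter fun i => (x i).1 = false).card : ℝ) / S.card else 0| ≤ 1 := by
        by_cases hS : S.Nonempty
        · rw [if_pos hS]
          have hc : (0:ℝ) < S.card := by exact_mod_cast Finset.card_pos.2 hS
          rw [abs_of_nonneg (div_nonneg (Nat.cast_nonneg _) hc.le), div_le_one hc]
          exact_mod_cast Finset.card_filter_le _ _
        · rw [if_neg hS]; norm_num
      calc |({p | 𝓡 p = S}).indicator (1 : (Fin (n+1) → ℝ) → ℝ) (pvals (n+1) x)| * _ ≤ 1 * 1 :=
          mul_le_mul (by rw [abs_of_nonneg h1]; exact h2) hq (abs_nonneg _) zero_le_one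
        _ = 1 := by norm_num
  have hGint : ∀ S : Finset (Fin (n+1)),
      Integrable (fun x => ({p | 𝓡 p = S}).indicator 1 (pvals (n+1) x) *
        maxOver S (fun i => lfdr π0 f1 ((x i).2))) (jointMeasure (n+1) π0 f1) := by
    intro S
    refine integrable_of_bound _ ?_ 1 ?_
    · exact (hindm S).mul (measurable_maxOver S _ fun i =>
        (measurable_lfdr hf1m).comp (measurable_pi_apply i).snd)
    · intro x
      rw [abs_mul]
      have h1 := (hind01 {p | 𝓡 p = S} (pvals (n+1) x)).1
      have h2 := (hind01 {p | 𝓡 p = S} (pvals (n+1) x)).2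
      have hq : |maxOver S (fun i => lfdr π0 f1 ((x i).2))| ≤ 1 := by
        rw [abs_of_nonneg (maxOver_nonneg fun i _ => (hlfdr01 _).1)]
        exact maxOver_le_one fun i _ => (hlfdr01 _).2
      calc |({p | 𝓡 p = S}).indicator (1 : (Fin (n+1) → ℝ) → ℝ) (pvals (n+1) x)| * _ ≤ 1 * 1 :=
          mul_le_mul (by rw [abs_of_nonneg h1]; exact h2) hq (abs_nonneg _) zero_le_one
        _ = 1 := by norm_num
  rw [integral_congr_ae (ae_of_all _ hL), integral_congr_ae (ae_of_all _ hR),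
    integral_finset_sum _ (fun S _ => hFint S), integral_finset_sum _ (fun S _ => hGint S)]
  exact Finset.sum_le_sum fun S _ => perS n hπ0 hπ1 hf1m hf1nn hf1int S (h𝓡meas S)
end
end

section
/- Let p_1,…,p_m ∈ [0,1] with empirical cdf F_m(t) = (1/m)·#{i : p_i ≤ t}, and let τ_q = p_(R_q) be the SL threshold at level q > 0. Let F : [0,1] → ℝ be any function, and let t_0 ∈ [0,1], δ > 0, η > 0 satisfy F(t) − F(t_0) − (t − t_0)/q ≤ −η for all t ∈ [t_0 + δ, 1]. If τ_q ≥ t_0 + δ, then sup_{t ∈ [0,1]} |F_m(t) − F(t)| ≥ η/2. -/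
open MeasureTheory ProbabilityTheory Filter

noncomputable section

lemma orderStat_mem (m : ℕ) (p : Fin m → ℝ) (hp : ∀ i, p i ∈ Set.Icc (0:ℝ) 1) (k : ℕ) :
    orderStat m p k ∈ Set.Icc (0:ℝ) 1 := by
  unfold orderStat
  split
  · exact hp _
  · exact ⟨le_refl 0, zero_le_one⟩

lemma slCount_spec (m : ℕ) (hm : 0 < m) (q : ℝ) (p : Fin m → ℝ) :
    slCount m q p ≤ m ∧ ∀ j ≤ m,
      orderStat m p (slCount m q p) - q * (slCount m q p) / m
        ≤ orderStat m p j - q * j / m := by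
  have hne : {k | k ≤ m ∧ ∀ j ≤ m,
      orderStat m p k - q * k / m ≤ orderStat m p j - q * j / m}.Nonempty := by
    obtain ⟨k, hk, hkmin⟩ := Finset.exists_min_image (Finset.range (m+1))
      (fun k => orderStat m p k - q * k / m) ⟨0, by simp⟩
    have hk' : k < m + 1 := Finset.mem_range.mp hk
    refine ⟨k, by omega, fun j hj => hkmin j ?_⟩
    simpa using Nat.lt_succ_of_le hj
  have hbdd : BddAbove {k | k ≤ m ∧ ∀ j ≤ m,
      orderStat m p k - q * k / m ≤ orderStat m p j - q * j / m} :=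
    ⟨m, fun k hk => hk.1⟩
  exact Nat.sSup_mem hne hbdd

lemma count_le_of_orderStat (m : ℕ) (p : Fin m → ℝ) (t0 : ℝ) (ht0 : 0 ≤ t0) :
    orderStat m p ((Finset.univ.filter fun i => p i ≤ t0).card) ≤ t0 := by
  set k0 := (Finset.univ.filter fun i => p i ≤ t0).card with hk0
  rcases Nat.eq_zero_or_pos k0 with h0 | h0
  · rw [h0]; unfold orderStat; simp [ht0]
  have hk0m : k0 ≤ m := by
    calc k0 ≤ Finset.univ.card := Finset.card_filter_le _ _
    _ = m := by simp
  -- the set of sorted indices with value ≤ t0 has card k0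
  have hS : (Finset.univ.filter fun j : Fin m => p (Tuple.sort p j) ≤ t0).card = k0 := by
    rw [hk0]
    rw [← Finset.card_map ⟨_, (Tuple.sort p).injective⟩]
    congr 1
    ext i
    simp only [Finset.mem_map, Finset.mem_filter, Finset.mem_univ, true_and,
      Function.Embedding.coeFn_mk]
    constructor
    · rintro ⟨j, hj, rfl⟩; exact hj
    · intro hi; exact ⟨(Tuple.sort p).symm i, by simpa using hi, by simp⟩
  -- there is j in that set with k0 - 1 ≤ j
  obtain ⟨j, hjmem, hjge⟩ : ∃ j : Fin m, p (Tuple.sort p j) ≤ t0 ∧ k0 - 1 ≤ (j : ℕ) := by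
    by_contra hc
    push_neg at hc
    have hsub : (Finset.univ.filter fun j : Fin m => p (Tuple.sort p j) ≤ t0) ⊆
        Finset.univ.filter fun j : Fin m => (j : ℕ) < k0 - 1 := by
      intro j hj
      simp only [Finset.mem_filter, Finset.mem_univ, true_and] at hj ⊢
      exact hc j hj
    have := Finset.card_le_card hsub
    rw [hS] at this
    have hcard : (Finset.univ.filter fun j : Fin m => (j : ℕ) < k0 - 1).card ≤ k0 - 1 := by
      rw [← Finset.card_range (k0 - 1)]
      refine Finset.card_le_card_of_injOn (fun j => (j : ℕ)) ?_ ?_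
      · intro j hj; simp only [Finset.mem_coe, Finset.mem_filter] at hj; simpa using hj.2
      · intro a _ b _ h; exact Fin.val_injective h
    omega
  have hos : orderStat m p k0 = p (Tuple.sort p ⟨k0 - 1, by omega⟩) := by
    unfold orderStat; rw [dif_pos ⟨h0, hk0m⟩]
  rw [hos]
  calc p (Tuple.sort p ⟨k0 - 1, by omega⟩) ≤ p (Tuple.sort p j) :=
        Tuple.monotone_sort p (by simpa [Fin.le_def] using hjge)
    _ ≤ t0 := hjmem

lemma slCount_le_count (m : ℕ) (hm : 0 < m) (q : ℝ) (p : Fin m → ℝ) :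
    slCount m q p ≤
      (Finset.univ.filter fun i => p i ≤ orderStat m p (slCount m q p)).card := by
  set R := slCount m q p with hR
  rcases Nat.eq_zero_or_pos R with h0 | h0
  · simp [h0]
  have hRm : R ≤ m := (slCount_spec m hm q p).1
  have hτ : orderStat m p R = p (Tuple.sort p ⟨R - 1, by omega⟩) := by
    unfold orderStat; rw [dif_pos ⟨h0, hRm⟩]
  have hcard : (Finset.univ.filter fun j : Fin m => (j : ℕ) < R).card = R := by
    conv_rhs => rw [← Finset.card_range R]
    refine Finset.card_bij (fun (j : Fin m) _ => (j : ℕ)) ?_ ?_ ?_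
    · intro j hj; simp only [Finset.mem_filter] at hj; simpa using hj.2
    · intro a _ b _ h; exact Fin.val_injective h
    · intro b hb
      simp only [Finset.mem_range] at hb
      exact ⟨⟨b, by omega⟩, by simp [hb], rfl⟩
  conv_lhs => rw [← hcard]
  refine Finset.card_le_card_of_injOn (fun j => Tuple.sort p j) ?_ ?_
  · intro j hj
    simp only [Finset.mem_coe, Finset.mem_filter, Finset.mem_univ, true_and] at hj ⊢
    rw [hτ]
    exact Tuple.monotone_sort p (by simp [Fin.le_def]; omega)
  · intro a _ b _ h; exact (Tuple.sort p).injective h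

/-- Let `p_1, …, p_m ∈ [0,1]` with empirical cdf `F_m`, and let
`τ_q` be the SL threshold at level `q > 0`. Let `F` be any function, and let
`t_0 ∈ [0,1]`, `δ > 0`, `η > 0` satisfy `F(t) - F(t_0) - (t - t_0)/q ≤ -η` for all
`t ∈ [t_0 + δ, 1]`. If `τ_q ≥ t_0 + δ`, then `sup_{t ∈ [0,1]} |F_m(t) - F(t)| ≥ η/2`
(witnessed by some `t ∈ [0,1]`). -/
theorem stmt16 (m : ℕ) (hm : 0 < m) (p : Fin m → ℝ) (hp : ∀ i, p i ∈ Set.Icc (0:ℝ) 1)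
    (q : ℝ) (hq : 0 < q) (F : ℝ → ℝ) (t0 δ η : ℝ)
    (ht0 : t0 ∈ Set.Icc (0:ℝ) 1) (hδ : 0 < δ) (hη : 0 < η)
    (hF : ∀ t ∈ Set.Icc (t0 + δ) 1, F t - F t0 - (t - t0) / q ≤ -η)
    (hτ : t0 + δ ≤ slThreshold m q p) :
    ∃ t ∈ Set.Icc (0:ℝ) 1, η / 2 ≤ |ecdf m p t - F t| := by
  obtain ⟨hRm, hmin⟩ := slCount_spec m hm q p
  set R := slCount m q p with hR
  have hτdef : slThreshold m q p = orderStat m p R := rfl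
  set τ := slThreshold m q p with hτd
  have hτ1 : τ ≤ 1 := by rw [hτdef]; exact (orderStat_mem m p hp R).2
  have hτ0 : (0:ℝ) ≤ τ := le_trans (by linarith [ht0.1]) hτ
  set k0 := (Finset.univ.filter fun i => p i ≤ t0).card with hk0
  have hk0m : k0 ≤ m := le_trans (Finset.card_filter_le _ _) (by simp)
  have hm' : (0:ℝ) < m := by exact_mod_cast hm
  have h2 : orderStat m p k0 ≤ t0 := count_le_of_orderStat m p t0 ht0.1
  have h3 : (R:ℝ) ≤ ((Finset.univ.filter fun i => p i ≤ τ).card : ℝ) := by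
    exact_mod_cast (hτdef ▸ slCount_le_count m hm q p)
  have e1 : τ - q * R / m ≤ t0 - q * k0 / m := by
    have := hmin k0 hk0m
    rw [hτdef]; linarith
  have e2 : (τ - t0) / q ≤ (R:ℝ)/m - (k0:ℝ)/m := by
    rw [div_le_iff₀ hq]
    have hx : q * (R:ℝ) / m - q * (k0:ℝ) / m = ((R:ℝ)/m - (k0:ℝ)/m) * q := by ring
    linarith
  have e3 : (R:ℝ)/m ≤ ecdf m p τ := by
    unfold ecdf
    gcongr
  have e4 : ecdf m p t0 = (k0:ℝ)/m := rfl
  have hFτ := hF τ ⟨hτ, hτ1⟩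
  have hkey : η ≤ (ecdf m p τ - F τ) - (ecdf m p t0 - F t0) := by
    rw [e4]; linarith
  by_cases hcase : η/2 ≤ |ecdf m p τ - F τ|
  · exact ⟨τ, ⟨hτ0, hτ1⟩, hcase⟩
  · refine ⟨t0, ht0, ?_⟩
    push_neg at hcase
    have h4 := le_abs_self (ecdf m p τ - F τ)
    have h5 := neg_abs_le (ecdf m p t0 - F t0)
    linarith
end
end
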